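/- Eigenvector centrality of specialized matrices: let M and M̂ be as in the single-component specialization construction, with all blocks U, Z, Y_1,…,Y_y, W_1,…,W_w having nonnegative entries, and suppose M is irreducible, i.e. for every pair of indices p, q there exists k ≥ 1 with (M^k)_{pq} > 0. Let ρ = ρ(M) and let u be a vector with strictly positive entries satisfying M u = ρ u (an eigencentrality vector). Then: (a) ρ is not a root of the characteristic polynomial of Z; (b) there exists a vector v with M̂ v = ρ v such that v_B = u_B; (c) for every (i,j) ∈ P, v_{(i,j)} = (ρI − Z)^{−1} W_j v_B, so copies of Z with the same incoming block W_j have equal components of v; and (d) for each fixed i ∈ {1,…,y}, Σ_{j=1}^{w} v_{(i,j)} = u_C, where u_C is the restriction of u to the C-block; moreover ρ(M̂) = ρ, so v is an eigenvector of M̂ for its spectral radius. -/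

import Mathlib

open Matrix

/-- The single-component specialization `M̂` of the block matrix `M = [[U, ΣY_i],[ΣW_j, Z]]`:
indices `B ⊕ (P × C)` with `P = Fin y × Fin w`; its `(B,B)` block is `U`, its
`(B, {(i,j)}×C)` block is `Y i`, its `({(i,j)}×C, B)` block is `W j`, its diagonal
`({(i,j)}×C, {(i,j)}×C)` blocks are `Z`, and all blocks between distinct copies are zero. -/
def specialization {l m y w : ℕ}
    (U : Matrix (Fin l) (Fin l) ℝ) (Z : Matrix (Fin m) (Fin m) ℝ)
    (Y : Fin y → Matrix (Fin l) (Fin m) ℝ) (W : Fin w → Matrix (Fin m) (Fin l) ℝ) :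
    Matrix (Fin l ⊕ ((Fin y × Fin w) × Fin m)) (Fin l ⊕ ((Fin y × Fin w) × Fin m)) ℝ :=
  fun r c =>
    match r, c with
    | Sum.inl a, Sum.inl b => U a b
    | Sum.inl a, Sum.inr ((i, _), c') => Y i a c'
    | Sum.inr ((_, j), r'), Sum.inl b => W j r' b
    | Sum.inr (p, r'), Sum.inr (q, c') => if p = q then Z r' c' else 0

/-- The original block matrix `M = [[U, Y],[W, Z]]` with `Y = ΣY_i`, `W = ΣW_j`. -/
def origMatrix {l m y w : ℕ}
    (U : Matrix (Fin l) (Fin l) ℝ) (Z : Matrix (Fin m) (Fin m) ℝ)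
    (Y : Fin y → Matrix (Fin l) (Fin m) ℝ) (W : Fin w → Matrix (Fin m) (Fin l) ℝ) :
    Matrix (Fin l ⊕ Fin m) (Fin l ⊕ Fin m) ℝ :=
  Matrix.fromBlocks U (∑ i, Y i) (∑ j, W j) Z

/-- The spectral radius of a square real matrix: the maximum of `|λ|` over the complex
roots `λ` of its characteristic polynomial (and `0` if there are none). -/
noncomputable def specRad {n : Type*} [Fintype n] [DecidableEq n]
    (A : Matrix n n ℝ) : ℝ :=
  (((Matrix.charpoly (A.map Complex.ofReal)).roots).map (fun z : ℂ => ‖z‖)).fold max 0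


lemma multiset_le_fold_max (s : Multiset ℝ) (a : ℝ) (ha : a ∈ s) : a ≤ s.fold max 0 := by
  induction s using Multiset.induction with
  | empty => simp at ha
  | cons b t ih =>
    rw [Multiset.fold_cons_left]
    rcases Multiset.mem_cons.1 ha with h | h
    · exact h ▸ le_max_left _ _
    · exact le_trans (ih h) (le_max_right _ _)

lemma multiset_fold_max_le (s : Multiset ℝ) (r : ℝ) (h0 : 0 ≤ r) (h : ∀ a ∈ s, a ≤ r) :
    s.fold max 0 ≤ r := by
  induction s using Multiset.induction with
  | empty => simpa using h0
  | cons b t ih =>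
    rw [Multiset.fold_cons_left]
    exact max_le (h b (Multiset.mem_cons_self _ _))
      (ih fun a ha => h a (Multiset.mem_cons_of_mem ha))

lemma eval_charpoly' {n : Type*} [Fintype n] [DecidableEq n] (A : Matrix n n ℂ) (μ : ℂ) :
    Polynomial.eval μ A.charpoly = (μ • (1 : Matrix n n ℂ) - A).det := by
  have : Polynomial.eval μ A.charpoly
      = ((charmatrix A).map (Polynomial.evalRingHom μ)).det := by
    rw [Matrix.charpoly]
    exact (RingHom.map_det (Polynomial.evalRingHom μ) (charmatrix A)).symm ▸ rfl
  rw [this]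
  congr 1
  ext i j
  by_cases h : i = j
  · subst h
    simp [charmatrix_apply_eq, Matrix.one_apply]
  · simp [charmatrix_apply_ne _ _ _ h, Matrix.one_apply_ne h]

lemma eig_iff {n : Type*} [Fintype n] [DecidableEq n] (A : Matrix n n ℂ) (μ : ℂ) :
    Polynomial.eval μ A.charpoly = 0 ↔ ∃ x : n → ℂ, x ≠ 0 ∧ A.mulVec x = μ • x := by
  rw [eval_charpoly', ← Matrix.exists_mulVec_eq_zero_iff]
  constructor
  · rintro ⟨x, hx, hx0⟩
    refine ⟨x, hx, ?_⟩
    rw [sub_mulVec, smul_mulVec, one_mulVec, sub_eq_zero] at hx0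
    exact hx0.symm
  · rintro ⟨x, hx, hx0⟩
    refine ⟨x, hx, ?_⟩
    rw [sub_mulVec, smul_mulVec, one_mulVec, hx0, sub_self]

lemma specRad_nonneg' {n : Type*} [Fintype n] [DecidableEq n] (A : Matrix n n ℝ) :
    0 ≤ (((Matrix.charpoly (A.map Complex.ofReal)).roots).map (fun z : ℂ => ‖z‖)).fold max 0 := by
  induction (((Matrix.charpoly (A.map Complex.ofReal)).roots).map (fun z : ℂ => ‖z‖)) using
      Multiset.induction with
  | empty => simp
  | cons b t ih => rw [Multiset.fold_cons_left]; exact le_trans ih (le_max_right _ _)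

lemma specRad_ge {n : Type*} [Fintype n] [DecidableEq n] (A : Matrix n n ℝ) (μ : ℂ)
    (h : Polynomial.eval μ (Matrix.charpoly (A.map Complex.ofReal)) = 0) :
    ‖μ‖ ≤ (((Matrix.charpoly (A.map Complex.ofReal)).roots).map (fun z : ℂ => ‖z‖)).fold max 0 := by
  apply multiset_le_fold_max
  apply Multiset.mem_map_of_mem
  rw [Polynomial.mem_roots ((Matrix.charpoly_monic _).ne_zero)]
  exact h

lemma specRad_le {n : Type*} [Fintype n] [DecidableEq n] (A : Matrix n n ℝ) (r : ℝ)
    (h0 : 0 ≤ r)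
    (h : ∀ μ : ℂ, Polynomial.eval μ (Matrix.charpoly (A.map Complex.ofReal)) = 0 →
      ‖μ‖ ≤ r) :
    (((Matrix.charpoly (A.map Complex.ofReal)).roots).map (fun z : ℂ => ‖z‖)).fold max 0 ≤ r := by
  apply multiset_fold_max_le _ _ h0
  intro a ha
  obtain ⟨μ, hμ, rfl⟩ := Multiset.mem_map.1 ha
  exact h μ ((Polynomial.mem_roots ((Matrix.charpoly_monic _).ne_zero)).1 hμ)

lemma entry_nonneg_pow {n : Type*} [Fintype n] [DecidableEq n] (A : Matrix n n ℝ)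
    (h : ∀ p q, 0 ≤ A p q) (k : ℕ) : ∀ p q, 0 ≤ (A ^ k) p q := by
  induction k with
  | zero => intro p q; simp [Matrix.one_apply]; positivity
  | succ k ih =>
    intro p q
    rw [pow_succ, Matrix.mul_apply]
    exact Finset.sum_nonneg fun r _ => mul_nonneg (ih p r) (h r q)

/-- eigenvector centrality of specialized matrices.  If the nonnegative block
matrix `M` is irreducible, `ρ = ρ(M)`, and `u > 0` is an eigencentrality vector of `M`,
then (a) `ρ` is not an eigenvalue of `Z`; (b) there is `v` with `M̂ v = ρ v` and
`v_B = u_B`; (c) `v_{(i,j)} = (ρI − Z)⁻¹ W_j v_B` (so copies with the same incoming block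
carry equal components); (d) for each `i`, `Σ_j v_{(i,j)} = u_C`; moreover
`ρ(M̂) = ρ(M)`, so `v` is an eigenvector of `M̂` for its spectral radius. -/
theorem eigencentrality_of_specialization
    {l m y w : ℕ} (hl : 1 ≤ l) (hm : 1 ≤ m) (hy : 1 ≤ y) (hw : 1 ≤ w)
    (U : Matrix (Fin l) (Fin l) ℝ) (Z : Matrix (Fin m) (Fin m) ℝ)
    (Y : Fin y → Matrix (Fin l) (Fin m) ℝ) (W : Fin w → Matrix (Fin m) (Fin l) ℝ)
    (hU : ∀ a b, 0 ≤ U a b) (hZ : ∀ a b, 0 ≤ Z a b)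
    (hY : ∀ i a b, 0 ≤ Y i a b) (hW : ∀ j a b, 0 ≤ W j a b)
    (hirr : ∀ p q : Fin l ⊕ Fin m, ∃ k : ℕ, 1 ≤ k ∧ 0 < (origMatrix U Z Y W ^ k) p q)
    (u : (Fin l ⊕ Fin m) → ℝ) (hupos : ∀ p, 0 < u p)
    (heig : (origMatrix U Z Y W).mulVec u = specRad (origMatrix U Z Y W) • u) :
    Polynomial.eval ((specRad (origMatrix U Z Y W) : ℝ) : ℂ)
        (Matrix.charpoly (Z.map Complex.ofReal)) ≠ 0
    ∧ (∃ v : (Fin l ⊕ ((Fin y × Fin w) × Fin m)) → ℝ,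
        (specialization U Z Y W).mulVec v = specRad (origMatrix U Z Y W) • v
        ∧ (∀ b : Fin l, v (Sum.inl b) = u (Sum.inl b))
        ∧ (∀ (i : Fin y) (j : Fin w) (c : Fin m),
            v (Sum.inr ((i, j), c))
              = (((specRad (origMatrix U Z Y W) • (1 : Matrix (Fin m) (Fin m) ℝ) - Z)⁻¹
                  * W j).mulVec (fun b => v (Sum.inl b))) c)
        ∧ (∀ (i i' : Fin y) (j : Fin w) (c : Fin m),
            v (Sum.inr ((i, j), c)) = v (Sum.inr ((i', j), c)))
        ∧ (∀ (i : Fin y) (c : Fin m),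
            ∑ j : Fin w, v (Sum.inr ((i, j), c)) = u (Sum.inr c)))
    ∧ specRad (specialization U Z Y W) = specRad (origMatrix U Z Y W) := by
  classical
  set ρ := specRad (origMatrix U Z Y W) with hρdef
  set M := origMatrix U Z Y W with hMdef
  have hl0 : 0 < l := hl
  have hm0 : 0 < m := hm
  have hy0 : 0 < y := hy
  have hw0 : 0 < w := hw
  have hMnn : ∀ p q, 0 ≤ M p q := by
    rintro (b | c) (b' | c') <;>
      simp only [hMdef, origMatrix, fromBlocks_apply₁₁, fromBlocks_apply₁₂,
        fromBlocks_apply₂₁, fromBlocks_apply₂₂, Matrix.sum_apply]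
    · exact hU b b'
    · exact Finset.sum_nonneg fun i _ => hY i b c'
    · exact Finset.sum_nonneg fun j _ => hW j c b'
    · exact hZ c c'
  have hrow : ∀ p, ∑ q, M p q * u q = ρ * u p := by
    intro p
    have := congrFun heig p
    simpa [Matrix.mulVec, dotProduct] using this
  have hρ0 : 0 ≤ ρ := by
    by_contra hneg
    push_neg at hneg
    have h1 := hrow (Sum.inl ⟨0, hl0⟩)
    have h2 : 0 ≤ ∑ q, M (Sum.inl ⟨0, hl0⟩) q * u q :=
      Finset.sum_nonneg fun q _ => mul_nonneg (hMnn _ _) (hupos q).le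
    nlinarith [hupos (Sum.inl (⟨0, hl0⟩ : Fin l))]
  -- row equations for the two blocks
  have hBeq : ∀ b, (∑ b', U b b' * u (Sum.inl b')) + (∑ c, (∑ i, Y i) b c * u (Sum.inr c))
      = ρ * u (Sum.inl b) := by
    intro b
    have := hrow (Sum.inl b)
    simpa [hMdef, origMatrix, Fintype.sum_sum_type] using this
  have hCeq : ∀ c, (∑ b, (∑ j, W j) c b * u (Sum.inl b)) + (∑ c', Z c c' * u (Sum.inr c'))
      = ρ * u (Sum.inr c) := by
    intro c
    have := hrow (Sum.inr c)
    simpa [hMdef, origMatrix, Fintype.sum_sum_type] using this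
  have hZu : ∀ c, (∑ c', Z c c' * u (Sum.inr c')) ≤ ρ * u (Sum.inr c) := by
    intro c
    have h1 := hCeq c
    have h2 : 0 ≤ ∑ b, (∑ j, W j) c b * u (Sum.inl b) :=
      Finset.sum_nonneg fun b _ => mul_nonneg
        (by rw [Matrix.sum_apply]; exact Finset.sum_nonneg fun j _ => hW j c b) (hupos _).le
    linarith
  -- Part (a)
  have ha : Polynomial.eval ((ρ : ℝ) : ℂ) (Matrix.charpoly (Z.map Complex.ofReal)) ≠ 0 := by
    intro h
    obtain ⟨x, hx0, hxe⟩ := (eig_iff _ _).1 h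
    set a : Fin m → ℝ := fun c => ‖x c‖ with hadef
    have ha0 : ∀ c, 0 ≤ a c := fun c => norm_nonneg _
    have hstep : ∀ c, ρ * a c ≤ ∑ c', Z c c' * a c' := by
      intro c
      have h1 : ∑ c', (Z c c' : ℂ) * x c' = (ρ : ℂ) * x c := by
        have := congrFun hxe c
        simpa [Matrix.mulVec, dotProduct, Matrix.map_apply] using this
      calc ρ * a c = ‖(ρ : ℂ) * x c‖ := by
            rw [norm_mul, Complex.norm_real, Real.norm_of_nonneg hρ0]
        _ = ‖∑ c', (Z c c' : ℂ) * x c'‖ := by rw [h1]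
        _ ≤ ∑ c', ‖(Z c c' : ℂ) * x c'‖ :=
            norm_sum_le _ _
        _ = ∑ c', Z c c' * a c' := by
            apply Finset.sum_congr rfl
            intro c' _
            rw [norm_mul, Complex.norm_real, Real.norm_of_nonneg (hZ c c')]
    have hmne : (Finset.univ : Finset (Fin m)).Nonempty := ⟨⟨0, hm0⟩, Finset.mem_univ _⟩
    set t := Finset.univ.sup' hmne (fun c => a c / u (Sum.inr c)) with htdef
    have hle : ∀ c, a c ≤ t * u (Sum.inr c) := by
      intro c
      have h1 : a c / u (Sum.inr c) ≤ t :=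
        Finset.le_sup' (fun c => a c / u (Sum.inr c)) (Finset.mem_univ c)
      rw [div_le_iff₀ (hupos _)] at h1
      linarith [h1]
    have ht0 : 0 < t := by
      have : ∃ c, x c ≠ 0 := by
        by_contra hcon
        push_neg at hcon
        exact hx0 (funext hcon)
      obtain ⟨c, hc⟩ := this
      have h1 : 0 < a c := norm_pos_iff.2 hc
      have h2 : a c / u (Sum.inr c) ≤ t :=
        Finset.le_sup' (fun c => a c / u (Sum.inr c)) (Finset.mem_univ c)
      have h3 : 0 < a c / u (Sum.inr c) := div_pos h1 (hupos _)
      linarith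
    obtain ⟨c0, -, hc0⟩ := Finset.exists_mem_eq_sup' hmne (fun c => a c / u (Sum.inr c))
    have hc0eq : a c0 = t * u (Sum.inr c0) := by
      rw [htdef, hc0]
      exact (div_mul_cancel₀ _ (ne_of_gt (hupos (Sum.inr c0)))).symm
    -- key closure property
    have hkey : ∀ c, a c = t * u (Sum.inr c) →
        (∀ b, (∑ j, W j) c b = 0) ∧ (∀ c', Z c c' ≠ 0 → a c' = t * u (Sum.inr c')) := by
      intro c hc
      have e1 := hstep c
      have e2 : ∑ c', Z c c' * a c' ≤ t * ∑ c', Z c c' * u (Sum.inr c') := by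
        rw [Finset.mul_sum]
        apply Finset.sum_le_sum
        intro c' _
        calc Z c c' * a c' ≤ Z c c' * (t * u (Sum.inr c')) :=
              mul_le_mul_of_nonneg_left (hle c') (hZ c c')
          _ = t * (Z c c' * u (Sum.inr c')) := by ring
      have e3 : t * (∑ c', Z c c' * u (Sum.inr c')) ≤ t * (ρ * u (Sum.inr c)) :=
        mul_le_mul_of_nonneg_left (hZu c) ht0.le
      have hac : ρ * a c = t * (ρ * u (Sum.inr c)) := by rw [hc]; ring
      have q1 : ∑ c', Z c c' * a c' = t * ∑ c', Z c c' * u (Sum.inr c') := by linarith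
      have q2 : t * (∑ c', Z c c' * u (Sum.inr c')) = t * (ρ * u (Sum.inr c)) := by linarith
      have q3 : ∑ c', Z c c' * u (Sum.inr c') = ρ * u (Sum.inr c) :=
        mul_left_cancel₀ (ne_of_gt ht0) q2
      constructor
      · intro b
        have hW0 : ∑ b, (∑ j, W j) c b * u (Sum.inl b) = 0 := by
          have := hCeq c
          linarith
        have hall := (Finset.sum_eq_zero_iff_of_nonneg (fun b _ => mul_nonneg
          (by rw [Matrix.sum_apply]; exact Finset.sum_nonneg fun j _ => hW j c b)
          (hupos _).le)).1 hW0 b (Finset.mem_univ b)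
        have := hupos (Sum.inl b)
        rcases mul_eq_zero.1 hall with h' | h'
        · exact h'
        · exact absurd h' (ne_of_gt this)
      · intro c' hZne
        have hzero : ∑ c', Z c c' * (t * u (Sum.inr c') - a c') = 0 := by
          have : ∑ c'', Z c c'' * (t * u (Sum.inr c'') - a c'')
              = t * (∑ c'', Z c c'' * u (Sum.inr c'')) - ∑ c'', Z c c'' * a c'' := by
            rw [Finset.mul_sum, ← Finset.sum_sub_distrib]
            apply Finset.sum_congr rfl
            intro c'' _
            ring
          rw [this, q1]
          ring
        have hterm := (Finset.sum_eq_zero_iff_of_nonneg (fun c'' _ => mul_nonneg (hZ c c'')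
          (by linarith [hle c'']))).1 hzero c' (Finset.mem_univ c')
        rcases mul_eq_zero.1 hterm with h' | h'
        · exact absurd h' hZne
        · linarith
    -- closure under powers of M
    have hclosed : ∀ k : ℕ, ∀ c, a c = t * u (Sum.inr c) → ∀ q,
        0 < (M ^ k) (Sum.inr c) q → ∃ c', q = Sum.inr c' ∧ a c' = t * u (Sum.inr c') := by
      intro k
      induction k with
      | zero =>
        intro c hc q hq
        rw [pow_zero] at hq
        have : q = Sum.inr c := by
          by_contra hne
          rw [Matrix.one_apply_ne (Ne.symm hne)] at hq
          exact lt_irrefl _ hq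
        exact ⟨c, this, hc⟩
      | succ k ih =>
        intro c hc q hq
        rw [pow_succ', Matrix.mul_apply] at hq
        have hex : ∃ r, 0 < M (Sum.inr c) r * (M ^ k) r q := by
          by_contra hcon
          push_neg at hcon
          have : ∑ r, M (Sum.inr c) r * (M ^ k) r q ≤ 0 :=
            Finset.sum_nonpos fun r _ => hcon r
          linarith
        obtain ⟨r, hr⟩ := hex
        rcases r with b | c'
        · exfalso
          have hWc : M (Sum.inr c) (Sum.inl b) = 0 := by
            show (origMatrix U Z Y W) (Sum.inr c) (Sum.inl b) = 0
            simpa [origMatrix] using (hkey c hc).1 b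
          rw [hWc, zero_mul] at hr
          exact lt_irrefl _ hr
        · rcases mul_pos_iff.1 hr with ⟨h1, h2⟩ | ⟨h1, h2⟩
          · have hZne : Z c c' ≠ 0 := by
              have : M (Sum.inr c) (Sum.inr c') = Z c c' := by simp [hMdef, origMatrix]
              rw [this] at h1
              exact ne_of_gt h1
            exact ih c' ((hkey c hc).2 c' hZne) q h2
          · exact absurd h1 (not_lt.2 (hMnn _ _))
    obtain ⟨k, -, hkpos⟩ := hirr (Sum.inr c0) (Sum.inl ⟨0, hl0⟩)
    obtain ⟨c', heq, -⟩ := hclosed k c0 hc0eq _ hkpos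
    exact Sum.inl_ne_inr heq

  -- invertibility of A = ρ•1 - Z
  set A : Matrix (Fin m) (Fin m) ℝ := ρ • (1 : Matrix (Fin m) (Fin m) ℝ) - Z with hAdef
  have hmapA : A.map Complex.ofReal
      = (ρ : ℂ) • (1 : Matrix (Fin m) (Fin m) ℂ) - Z.map Complex.ofReal := by
    ext c c'
    by_cases h : c = c' <;>
      simp [hAdef, Matrix.map_apply, Matrix.one_apply, h]
  have hdetR : A.det ≠ 0 := by
    intro h
    apply ha
    rw [eval_charpoly', ← hmapA]
    have : (A.map Complex.ofReal).det = Complex.ofRealHom A.det :=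
      (Complex.ofRealHom.map_det A).symm
    rw [this, h]
    simp
  have hAunit : IsUnit A.det := isUnit_iff_ne_zero.2 hdetR
  have hcancel : ∀ z1 z2 : Fin m → ℝ, A.mulVec z1 = A.mulVec z2 → z1 = z2 := by
    intro z1 z2 h
    have h1 := congrArg (fun z => A⁻¹.mulVec z) h
    simpa [Matrix.mulVec_mulVec, Matrix.nonsing_inv_mul A hAunit] using h1
  -- the vectors
  set uB : Fin l → ℝ := fun b => u (Sum.inl b) with huB
  set uC : Fin m → ℝ := fun c => u (Sum.inr c) with huC
  have hAuC : A.mulVec uC = (∑ j, W j).mulVec uB := by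
    ext c
    have := hCeq c
    simp only [hAdef, Matrix.sub_mulVec, Matrix.smul_mulVec, Matrix.one_mulVec,
      Pi.sub_apply, Pi.smul_apply, smul_eq_mul]
    simp only [Matrix.mulVec, dotProduct, huB, huC]
    linarith
  set vC : Fin w → Fin m → ℝ := fun j => (A⁻¹ * W j).mulVec uB with hvC
  have hAvC : ∀ j, A.mulVec (vC j) = (W j).mulVec uB := by
    intro j
    rw [hvC]
    rw [Matrix.mulVec_mulVec, ← Matrix.mul_assoc, Matrix.mul_nonsing_inv A hAunit,
      Matrix.one_mul]
  have hsum : ∑ j, vC j = uC := by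
    apply hcancel
    rw [hAuC]
    have h1 : A.mulVec (∑ j, vC j) = ∑ j, A.mulVec (vC j) := by
      ext c
      simp [Matrix.mulVec, dotProduct, Finset.mul_sum]
      rw [Finset.sum_comm]
    rw [h1]
    ext c
    simp only [Finset.sum_apply]
    simp only [fun j => hAvC j]
    simp [Matrix.mulVec, dotProduct, Matrix.sum_apply, Finset.sum_mul]
    rw [Finset.sum_comm]
  set v : (Fin l ⊕ ((Fin y × Fin w) × Fin m)) → ℝ :=
    Sum.elim uB (fun pc => vC pc.1.2 pc.2) with hv
  have hveig : (specialization U Z Y W).mulVec v = ρ • v := by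
    have hsumc : ∀ c, ∑ j, vC j c = uC c := by
      intro c
      have := congrFun hsum c
      simpa using this
    funext p
    rcases p with b | ⟨⟨i, j⟩, c⟩
    · simp only [Matrix.mulVec, dotProduct, Pi.smul_apply, smul_eq_mul]
      rw [Fintype.sum_sum_type]
      have hleft : (∑ q : (Fin y × Fin w) × Fin m,
          specialization U Z Y W (Sum.inl b) (Sum.inr q) * v (Sum.inr q))
          = ∑ c, (∑ i, Y i) b c * uC c := by
        rw [Fintype.sum_prod_type, Fintype.sum_prod_type]
        have step1 : ∀ (i : Fin y) (j : Fin w),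
            (∑ c, specialization U Z Y W (Sum.inl b) (Sum.inr ((i, j), c))
              * v (Sum.inr ((i, j), c))) = ∑ c, Y i b c * vC j c := by
          intro i j
          apply Finset.sum_congr rfl
          intro c _
          rfl
        calc (∑ i, ∑ j, ∑ c, specialization U Z Y W (Sum.inl b) (Sum.inr ((i, j), c))
              * v (Sum.inr ((i, j), c)))
            = ∑ i, ∑ j, ∑ c, Y i b c * vC j c := by
              apply Finset.sum_congr rfl
              intro i _
              apply Finset.sum_congr rfl
              intro j _
              exact step1 i j
          _ = ∑ i, ∑ c, Y i b c * uC c := by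
              apply Finset.sum_congr rfl
              intro i _
              rw [Finset.sum_comm]
              apply Finset.sum_congr rfl
              intro c _
              rw [← Finset.mul_sum, hsumc c]
          _ = ∑ c, (∑ i, Y i) b c * uC c := by
              rw [Finset.sum_comm]
              apply Finset.sum_congr rfl
              intro c _
              rw [Matrix.sum_apply, Finset.sum_mul]
      rw [hleft]
      have := hBeq b
      exact this
    · simp only [Matrix.mulVec, dotProduct, Pi.smul_apply, smul_eq_mul]
      rw [Fintype.sum_sum_type]
      have hright : (∑ q : (Fin y × Fin w) × Fin m,
          specialization U Z Y W (Sum.inr ((i, j), c)) (Sum.inr q) * v (Sum.inr q))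
          = ∑ c', Z c c' * vC j c' := by
        rw [Fintype.sum_prod_type]
        have step : ∀ p' : Fin y × Fin w,
            (∑ c', specialization U Z Y W (Sum.inr ((i, j), c)) (Sum.inr (p', c'))
              * v (Sum.inr (p', c')))
            = if (i, j) = p' then ∑ c', Z c c' * vC p'.2 c' else 0 := by
          intro p'
          by_cases h : (i, j) = p'
          · rw [if_pos h]
            apply Finset.sum_congr rfl
            intro c' _
            show (if (i, j) = p' then Z c c' else 0) * v (Sum.inr (p', c')) = _
            rw [if_pos h]
            rfl
          · rw [if_neg h]
            apply Finset.sum_eq_zero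
            intro c' _
            show (if (i, j) = p' then Z c c' else 0) * v (Sum.inr (p', c')) = 0
            rw [if_neg h, zero_mul]
        rw [Finset.sum_congr rfl fun p' _ => step p']
        rw [Finset.sum_ite_eq]
        simp
      rw [hright]
      have h1 := congrFun (hAvC j) c
      simp only [hAdef, Matrix.sub_mulVec, Matrix.smul_mulVec, Matrix.one_mulVec,
        Pi.sub_apply, Pi.smul_apply, smul_eq_mul, Matrix.mulVec, dotProduct] at h1
      have hfirst : (∑ b', specialization U Z Y W (Sum.inr ((i, j), c)) (Sum.inl b')
          * v (Sum.inl b')) = ∑ b', W j c b' * uB b' := rfl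
      rw [hfirst]
      have h1' : ∑ x, ((ρ • (1 : Matrix (Fin m) (Fin m) ℝ) - Z) c x) * vC j x
          = ρ * vC j c - ∑ x, Z c x * vC j x := by
        have hterm : ∀ x, ((ρ • (1 : Matrix (Fin m) (Fin m) ℝ) - Z) c x) * vC j x
            = ρ * ((if c = x then (1 : ℝ) else 0) * vC j x) - Z c x * vC j x := by
          intro x
          simp only [Matrix.sub_apply, Matrix.smul_apply, Matrix.one_apply, smul_eq_mul]
          ring
        rw [Finset.sum_congr rfl fun x _ => hterm x, Finset.sum_sub_distrib, ← Finset.mul_sum]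
        congr 2
        simp [ite_mul]
      rw [h1'] at h1
      show _ = ρ * vC j c
      linarith

  refine ⟨ha, ⟨v, hveig, fun b => rfl, fun i j c => rfl, fun i i' j c => rfl, ?_⟩, ?_⟩
  · intro i c
    have := congrFun hsum c
    simp only [Finset.sum_apply] at this
    exact this
  · -- spectral radius equality
    have hMhnn : ∀ p q, 0 ≤ specialization U Z Y W p q := by
      rintro (b | ⟨⟨i, j⟩, c⟩) (b' | ⟨⟨i', j'⟩, c'⟩)
      · exact hU b b'
      · exact hY i' b c'
      · exact hW j c b'
      · show 0 ≤ if ((i : Fin y), (j : Fin w)) = (i', j') then Z c c' else 0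
        split_ifs
        · exact hZ c c'
        · exact le_refl 0
    have hge : ρ ≤ specRad (specialization U Z Y W) := by
      set x : (Fin l ⊕ ((Fin y × Fin w) × Fin m)) → ℂ := fun p => ((v p : ℝ) : ℂ) with hx
      have hxe : ((specialization U Z Y W).map Complex.ofReal).mulVec x = (ρ : ℂ) • x := by
        funext p
        have h0 := congrFun hveig p
        simp only [Matrix.mulVec, dotProduct, Pi.smul_apply, smul_eq_mul] at h0 ⊢
        have h2 := congrArg (fun r : ℝ => (r : ℂ)) h0
        push_cast at h2
        simpa [hx, Matrix.map_apply] using h2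
      have hxne : x ≠ 0 := by
        intro h
        have h1 := congrFun h (Sum.inl ⟨0, hl0⟩)
        simp only [hx, Pi.zero_apply, Complex.ofReal_eq_zero] at h1
        have : v (Sum.inl ⟨0, hl0⟩) = u (Sum.inl ⟨0, hl0⟩) := rfl
        rw [this] at h1
        exact absurd h1 (ne_of_gt (hupos _))
      have hev : Polynomial.eval ((ρ : ℝ) : ℂ)
          (Matrix.charpoly ((specialization U Z Y W).map Complex.ofReal)) = 0 :=
        (eig_iff _ _).2 ⟨x, hxne, hxe⟩
      have h3 := specRad_ge (specialization U Z Y W) ((ρ : ℝ) : ℂ) hev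
      rw [Complex.norm_real, Real.norm_of_nonneg hρ0] at h3
      exact h3
    have hle2 : specRad (specialization U Z Y W) ≤ ρ := by
      apply specRad_le _ _ hρ0
      intro μ hμ
      obtain ⟨x, hx0, hxe⟩ := (eig_iff _ _).1 hμ
      have hyne : (Finset.univ : Finset (Fin y)).Nonempty := ⟨⟨0, hy0⟩, Finset.mem_univ _⟩
      set η : Fin w → Fin m → ℝ := fun j c =>
        Finset.univ.sup' hyne (fun i => ‖x (Sum.inr ((i, j), c))‖) with hη
      have hηge : ∀ i j c, ‖x (Sum.inr ((i, j), c))‖ ≤ η j c :=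
        fun i j c => Finset.le_sup' (fun i => ‖x (Sum.inr ((i, j), c))‖)
          (Finset.mem_univ i)
      have hη0 : ∀ j c, 0 ≤ η j c := fun j c =>
        le_trans (norm_nonneg _) (hηge ⟨0, hy0⟩ j c)
      set ξ : (Fin l ⊕ Fin m) → ℝ :=
        Sum.elim (fun b => ‖x (Sum.inl b)‖) (fun c => ∑ j, η j c) with hξ
      have hξ0 : ∀ p, 0 ≤ ξ p := by
        rintro (b | c)
        · exact norm_nonneg _
        · exact Finset.sum_nonneg fun j _ => hη0 j c
      have habs : ∀ p, ‖μ‖ * ‖x p‖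
          ≤ ∑ q, specialization U Z Y W p q * ‖x q‖ := by
        intro p
        have h1 : ∑ q, ((specialization U Z Y W p q : ℝ) : ℂ) * x q = μ * x p := by
          have := congrFun hxe p
          simpa [Matrix.mulVec, dotProduct, Matrix.map_apply] using this
        calc ‖μ‖ * ‖x p‖ = ‖μ * x p‖ :=
              (norm_mul _ _).symm
          _ = ‖∑ q, ((specialization U Z Y W p q : ℝ) : ℂ) * x q‖ := by rw [h1]
          _ ≤ ∑ q, ‖((specialization U Z Y W p q : ℝ) : ℂ) * x q‖ :=
              norm_sum_le _ _
          _ = ∑ q, specialization U Z Y W p q * ‖x q‖ := by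
              apply Finset.sum_congr rfl
              intro q _
              rw [norm_mul, Complex.norm_real, Real.norm_of_nonneg (hMhnn p q)]
      have hkey : ∀ p, ‖μ‖ * ξ p ≤ ∑ q, M p q * ξ q := by
        rintro (b | c)
        · refine le_trans (habs (Sum.inl b)) ?_
          rw [Fintype.sum_sum_type, Fintype.sum_sum_type]
          apply add_le_add
          · apply le_of_eq
            apply Finset.sum_congr rfl
            intro b' _
            have : M (Sum.inl b) (Sum.inl b') = U b b' := by simp [hMdef, origMatrix]
            rw [this]
            rfl
          · calc (∑ q : (Fin y × Fin w) × Fin m,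
                specialization U Z Y W (Sum.inl b) (Sum.inr q) * ‖x (Sum.inr q)‖)
                = ∑ i, ∑ j, ∑ c, Y i b c * ‖x (Sum.inr ((i, j), c))‖ := by
                  rw [Fintype.sum_prod_type, Fintype.sum_prod_type]
                  rfl
              _ ≤ ∑ i, ∑ j, ∑ c, Y i b c * η j c := by
                  apply Finset.sum_le_sum; intro i _
                  apply Finset.sum_le_sum; intro j _
                  apply Finset.sum_le_sum; intro c _
                  exact mul_le_mul_of_nonneg_left (hηge i j c) (hY i b c)
              _ = ∑ c, (∑ i, Y i) b c * ξ (Sum.inr c) := by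
                  have e1 : ∀ i : Fin y, (∑ j, ∑ c, Y i b c * η j c)
                      = ∑ c, Y i b c * ξ (Sum.inr c) := by
                    intro i
                    rw [Finset.sum_comm]
                    apply Finset.sum_congr rfl
                    intro c _
                    rw [← Finset.mul_sum]
                    rfl
                  rw [Finset.sum_congr rfl fun i _ => e1 i, Finset.sum_comm]
                  apply Finset.sum_congr rfl
                  intro c _
                  rw [Matrix.sum_apply, Finset.sum_mul]
              _ = ∑ q : Fin m, M (Sum.inl b) (Sum.inr q) * ξ (Sum.inr q) := by
                  apply Finset.sum_congr rfl
                  intro c _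
                  have : M (Sum.inl b) (Sum.inr c) = (∑ i, Y i) b c := by
                    simp [hMdef, origMatrix]
                  rw [this]
        · have hrow2 : ∀ j, ‖μ‖ * η j c
              ≤ (∑ b, W j c b * ξ (Sum.inl b)) + ∑ c', Z c c' * η j c' := by
            intro j
            obtain ⟨i0, -, hi0⟩ := Finset.exists_mem_eq_sup' hyne
              (fun i => ‖x (Sum.inr ((i, j), c))‖)
            have h1 := habs (Sum.inr ((i0, j), c))
            rw [Fintype.sum_sum_type] at h1
            have h2 : (∑ q : (Fin y × Fin w) × Fin m,
                specialization U Z Y W (Sum.inr ((i0, j), c)) (Sum.inr q)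
                  * ‖x (Sum.inr q)‖)
                ≤ ∑ c', Z c c' * η j c' := by
              rw [Fintype.sum_prod_type]
              have step : ∀ p' : Fin y × Fin w,
                  (∑ c', specialization U Z Y W (Sum.inr ((i0, j), c)) (Sum.inr (p', c'))
                    * ‖x (Sum.inr (p', c'))‖)
                  = if (i0, j) = p' then
                      (∑ c', Z c c' * ‖x (Sum.inr (p', c'))‖) else 0 := by
                intro p'
                by_cases h : (i0, j) = p'
                · rw [if_pos h]
                  apply Finset.sum_congr rfl
                  intro c' _
                  show (if (i0, j) = p' then Z c c' else 0) * _ = _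
                  rw [if_pos h]
                · rw [if_neg h]
                  apply Finset.sum_eq_zero
                  intro c' _
                  show (if (i0, j) = p' then Z c c' else 0) * _ = 0
                  rw [if_neg h, zero_mul]
              rw [Finset.sum_congr rfl fun p' _ => step p', Finset.sum_ite_eq, if_pos
                (Finset.mem_univ _)]
              apply Finset.sum_le_sum
              intro c' _
              exact mul_le_mul_of_nonneg_left (hηge i0 j c') (hZ c c')
            have h3 : (∑ b', specialization U Z Y W (Sum.inr ((i0, j), c)) (Sum.inl b')
                * ‖x (Sum.inl b')‖) = ∑ b, W j c b * ξ (Sum.inl b) := rfl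
            have h4 : η j c = ‖x (Sum.inr ((i0, j), c))‖ := hi0
            rw [h4]
            rw [h3] at h1
            linarith
          calc ‖μ‖ * ξ (Sum.inr c) = ∑ j, ‖μ‖ * η j c := by
                show ‖μ‖ * (∑ j, η j c) = _
                rw [Finset.mul_sum]
            _ ≤ ∑ j, ((∑ b, W j c b * ξ (Sum.inl b)) + ∑ c', Z c c' * η j c') :=
                Finset.sum_le_sum fun j _ => hrow2 j
            _ = (∑ b, (∑ j, W j) c b * ξ (Sum.inl b)) + ∑ c', Z c c' * ξ (Sum.inr c') := by
                rw [Finset.sum_add_distrib]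
                congr 1
                · rw [Finset.sum_comm]
                  apply Finset.sum_congr rfl
                  intro b _
                  rw [Matrix.sum_apply, Finset.sum_mul]
                · rw [Finset.sum_comm]
                  apply Finset.sum_congr rfl
                  intro c' _
                  show ∑ j, Z c c' * η j c' = Z c c' * ∑ j, η j c'
                  rw [Finset.mul_sum]
            _ = ∑ q, M (Sum.inr c) q * ξ q := by
                rw [Fintype.sum_sum_type]
                have e1 : ∀ b : Fin l, M (Sum.inr c) (Sum.inl b) * ξ (Sum.inl b)
                    = (∑ j, W j) c b * ξ (Sum.inl b) := fun b => by
                  simp [hMdef, origMatrix]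
                have e2 : ∀ c' : Fin m, M (Sum.inr c) (Sum.inr c') * ξ (Sum.inr c')
                    = Z c c' * ξ (Sum.inr c') := fun c' => by
                  simp [hMdef, origMatrix]
                rw [Finset.sum_congr rfl fun b _ => e1 b,
                  Finset.sum_congr rfl fun c' _ => e2 c']
      have hne : (Finset.univ : Finset (Fin l ⊕ Fin m)).Nonempty :=
        ⟨Sum.inl ⟨0, hl0⟩, Finset.mem_univ _⟩
      set t := Finset.univ.sup' hne (fun p => ξ p / u p) with ht
      have hlet : ∀ p, ξ p ≤ t * u p := by
        intro p
        have h1 : ξ p / u p ≤ t := Finset.le_sup' (fun p => ξ p / u p) (Finset.mem_univ p)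
        rw [div_le_iff₀ (hupos _)] at h1
        linarith
      have ht0 : 0 < t := by
        have hxq : ∃ q, x q ≠ 0 := by
          by_contra hcon
          push_neg at hcon
          exact hx0 (funext hcon)
        obtain ⟨q, hq⟩ := hxq
        have hpos : ∃ p, 0 < ξ p := by
          rcases q with b | ⟨⟨i, j⟩, c⟩
          · exact ⟨Sum.inl b, norm_pos_iff.2 hq⟩
          · refine ⟨Sum.inr c, ?_⟩
            have h1 : 0 < ‖x (Sum.inr ((i, j), c))‖ := norm_pos_iff.2 hq
            have h2 : η j c ≤ ∑ j', η j' c :=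
              Finset.single_le_sum (fun j' _ => hη0 j' c) (Finset.mem_univ j)
            have h3 := lt_of_lt_of_le h1 (hηge i j c)
            show 0 < ∑ j', η j' c
            linarith
        obtain ⟨p, hp⟩ := hpos
        have h1 : 0 < ξ p / u p := div_pos hp (hupos p)
        linarith [Finset.le_sup' (fun p => ξ p / u p) (Finset.mem_univ p)]
      obtain ⟨p0, -, hp0⟩ := Finset.exists_mem_eq_sup' hne (fun p => ξ p / u p)
      have hp0eq : ξ p0 = t * u p0 := by
        rw [ht, hp0]
        exact (div_mul_cancel₀ _ (ne_of_gt (hupos p0))).symm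
      have final : ‖μ‖ * (t * u p0) ≤ ρ * (t * u p0) := by
        calc ‖μ‖ * (t * u p0) = ‖μ‖ * ξ p0 := by rw [hp0eq]
          _ ≤ ∑ q, M p0 q * ξ q := hkey p0
          _ ≤ ∑ q, M p0 q * (t * u q) :=
              Finset.sum_le_sum fun q _ => mul_le_mul_of_nonneg_left (hlet q) (hMnn p0 q)
          _ = t * ∑ q, M p0 q * u q := by
              rw [Finset.mul_sum]
              apply Finset.sum_congr rfl
              intro q _
              ring
          _ = t * (ρ * u p0) := by rw [hrow p0]
          _ = ρ * (t * u p0) := by ring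
      exact le_of_mul_le_mul_right final (mul_pos ht0 (hupos p0))
    exact le_antisymm hle2 hge
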